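/- Let s be an odd prime power, F = GF(s), t = (s-1)/2, C₀ the nonzero squares, C₁ the nonzero non-squares. For every nonzero u ∈ F, the number of times u occurs in the multiset (({0} ∪ C₁) - C₀) ⊔ (C₁ - ({0} ∪ C₀)) when t is even, or in (({0} ∪ C₁) - C₀) ⊔ (C₀ - ({0} ∪ C₁)) when t is odd, equals t + 1. Here A - B denotes the multiset {a - b : a ∈ A, b ∈ B}. -/

import Mathlib

lemma aux_sq_mul {F : Type*} [Field F] {a c : F} (hc : c ≠ 0) :
    IsSquare (a * c ^ 2) ↔ IsSquare a := by
  constructor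
  · rintro ⟨d, hd⟩
    exact ⟨d * c⁻¹, by field_simp; linear_combination hd⟩
  · rintro ⟨d, hd⟩
    exact ⟨d * c, by rw [hd]; ring⟩

lemma aux_mul_nonsq {F : Type*} [Field F] [Fintype F] {a b : F} (ha : a ≠ 0) (hb : b ≠ 0) :
    ¬ IsSquare (a * b) ↔ (IsSquare a ↔ ¬ IsSquare b) := by
  classical
  have hA := quadraticChar_dichotomy (F := F) ha
  have hB := quadraticChar_dichotomy (F := F) hb
  have hmul : quadraticChar F (a * b) = quadraticChar F a * quadraticChar F b := map_mul _ _ _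
  rw [← quadraticChar_neg_one_iff_not_isSquare, ← quadraticChar_one_iff_isSquare ha,
    ← quadraticChar_neg_one_iff_not_isSquare (a := b), hmul]
  rcases hA with h | h <;> rcases hB with h' | h' <;> rw [h, h'] <;> norm_num

lemma cnt_pairs {F : Type*} [Field F] (u : F) (A B : Set F) :
    {p : F × F | p.1 ∈ A ∧ p.2 ∈ B ∧ p.1 - p.2 = u}.ncard
      = {b : F | b ∈ B ∧ u + b ∈ A}.ncard := by
  have himg : {p : F × F | p.1 ∈ A ∧ p.2 ∈ B ∧ p.1 - p.2 = u}
      = (fun b => (u + b, b)) '' {b : F | b ∈ B ∧ u + b ∈ A} := by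
    ext ⟨x, y⟩
    simp only [Set.mem_setOf_eq, Set.mem_image, Prod.mk.injEq]
    constructor
    · rintro ⟨hx, hy, hxy⟩
      exact ⟨y, ⟨hy, by rwa [show u + y = x by linear_combination -hxy]⟩,
        by linear_combination -hxy, rfl⟩
    · rintro ⟨b, ⟨hb, hub⟩, h1, h2⟩
      subst h2; rw [← h1]; exact ⟨hub, hb, by ring⟩
  rw [himg, Set.ncard_image_of_injective _ fun a b h => congrArg Prod.snd h]

theorem stmt6 (F : Type*) [Field F] [Fintype F] (s t : ℕ)
    (hs : Fintype.card F = s) (hodd : Odd s) (ht : t = (s - 1) / 2)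
    (C0 C1 : Set F)
    (hC0 : C0 = {x : F | x ≠ 0 ∧ IsSquare x})
    (hC1 : C1 = {x : F | x ≠ 0 ∧ ¬ IsSquare x})
    (u : F) (hu : u ≠ 0)
    (cnt : Set F → Set F → ℕ)
    (hcnt : ∀ A B : Set F,
      cnt A B = {p : F × F | p.1 ∈ A ∧ p.2 ∈ B ∧ p.1 - p.2 = u}.ncard) :
    (Even t → cnt ({0} ∪ C1) C0 + cnt C1 ({0} ∪ C0) = t + 1)
    ∧ (¬ Even t → cnt ({0} ∪ C1) C0 + cnt C0 ({0} ∪ C1) = t + 1) := by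
  classical
  obtain ⟨k, hk⟩ := hodd
  have hcnt' : ∀ A B : Set F, cnt A B = {b : F | b ∈ B ∧ u + b ∈ A}.ncard :=
    fun A B => (hcnt A B).trans (cnt_pairs u A B)
  -- characteristic ≠ 2
  have hchar2 : ringChar F ≠ 2 := by
    intro h
    have := FiniteField.even_card_of_char_two (F := F) h
    rw [hs] at this
    omega
  obtain ⟨g, hg⟩ := FiniteField.exists_nonsquare (F := F) hchar2
  have hg0 : g ≠ 0 := fun h => hg (h ▸ ⟨0, by simp⟩)
  -- cardinalities of C0, C1
  have himgC : (fun x => g * x) '' C0 = C1 := by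
    ext y
    simp only [Set.mem_image, hC0, hC1, Set.mem_setOf_eq]
    constructor
    · rintro ⟨x, ⟨hx0, hxsq⟩, rfl⟩
      refine ⟨mul_ne_zero hg0 hx0, ?_⟩
      rw [aux_mul_nonsq hg0 hx0]
      tauto
    · rintro ⟨hy0, hyns⟩
      have hz0 : g⁻¹ * y ≠ 0 := mul_ne_zero (inv_ne_zero hg0) hy0
      have hgz : g * (g⁻¹ * y) = y := by field_simp
      have := (aux_mul_nonsq hg0 hz0).mp (by rwa [hgz])
      exact ⟨g⁻¹ * y, ⟨hz0, by tauto⟩, hgz⟩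
  have hC0C1 : C0.ncard = C1.ncard := by
    rw [← himgC, Set.ncard_image_of_injective _ (mul_right_injective₀ hg0)]
  have hunion : C0 ∪ C1 = ({(0 : F)} : Set F)ᶜ := by
    ext x
    simp only [Set.mem_union, hC0, hC1, Set.mem_setOf_eq, Set.mem_compl_iff,
      Set.mem_singleton_iff]
    tauto
  have hdisjC : Disjoint C0 C1 := by
    rw [Set.disjoint_left]
    intro x hx hx'
    rw [hC0] at hx; rw [hC1] at hx'
    exact hx'.2 hx.2
  have hcompl : ({(0 : F)} : Set F).ncard + (({(0 : F)} : Set F)ᶜ).ncard = Nat.card F :=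
    Set.ncard_add_ncard_compl _
  have haddC : C0.ncard + C1.ncard = s - 1 := by
    rw [← Set.ncard_union_eq hdisjC (Set.toFinite _) (Set.toFinite _), hunion]
    rw [Set.ncard_singleton, Nat.card_eq_fintype_card, hs] at hcompl
    omega
  have hC1card : C1.ncard = t := by omega
  -- the two mixed sets
  set A1 : Set F := {b : F | b ∈ C0 ∧ u + b ∈ C1} with hA1
  set A2 : Set F := {b : F | b ∈ C1 ∧ u + b ∈ C0} with hA2
  set W : Set F := {b : F | b ≠ 0 ∧ ¬ IsSquare ((u + b) * b)} with hW
  have hWub : ∀ b : F, b ∈ W → u + b ≠ 0 := by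
    rintro b ⟨hb0, hns⟩ h
    exact hns (by rw [h, zero_mul]; exact ⟨0, by simp⟩)
  have hWsplit : W = A1 ∪ A2 := by
    ext b
    simp only [hW, hA1, hA2, Set.mem_setOf_eq, Set.mem_union, hC0, hC1]
    constructor
    · rintro ⟨hb0, hns⟩
      have hub0 : u + b ≠ 0 := hWub b ⟨hb0, hns⟩
      have hiff := (aux_mul_nonsq hub0 hb0).mp hns
      by_cases hsb : IsSquare b
      · exact Or.inl ⟨⟨hb0, hsb⟩, hub0, by tauto⟩
      · exact Or.inr ⟨⟨hb0, hsb⟩, hub0, by tauto⟩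
    · rintro (⟨⟨hb0, hsb⟩, hub0, hubs⟩ | ⟨⟨hb0, hsb⟩, hub0, hubs⟩) <;>
        exact ⟨hb0, (aux_mul_nonsq hub0 hb0).mpr (by tauto)⟩
  have hdisj12 : Disjoint A1 A2 := by
    rw [Set.disjoint_left]
    rintro b hb hb'
    rw [hA1, Set.mem_setOf_eq, hC0] at hb
    rw [hA2, Set.mem_setOf_eq, hC1] at hb'
    exact hb'.1.2 hb.1.2
  -- W is in bijection with C1
  have himgW : (fun b => (u + b) * b⁻¹) '' W = C1 := by
    ext y
    constructor
    · rintro ⟨b, hbW, rfl⟩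
      obtain ⟨hb0, hns⟩ := hbW
      have hub0 : u + b ≠ 0 := hWub b ⟨hb0, hns⟩
      rw [hC1, Set.mem_setOf_eq]
      refine ⟨mul_ne_zero hub0 (inv_ne_zero hb0), ?_⟩
      show ¬ IsSquare ((u + b) * b⁻¹)
      have heq : (u + b) * b⁻¹ = ((u + b) * b) * (b⁻¹) ^ 2 := by
        field_simp
      rw [heq, aux_sq_mul (inv_ne_zero hb0)]
      exact hns
    · rintro hy
      rw [hC1, Set.mem_setOf_eq] at hy
      obtain ⟨hy0, hyns⟩ := hy
      have hy1 : y - 1 ≠ 0 := sub_ne_zero.mpr fun h => hyns (h ▸ IsSquare.one)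
      have hb0 : u * (y - 1)⁻¹ ≠ 0 := mul_ne_zero hu (inv_ne_zero hy1)
      refine ⟨u * (y - 1)⁻¹, ⟨hb0, ?_⟩, ?_⟩
      · have heq : (u + u * (y - 1)⁻¹) * (u * (y - 1)⁻¹) = y * (u * (y - 1)⁻¹) ^ 2 := by
          field_simp
          ring
        rw [heq, aux_sq_mul hb0]
        exact hyns
      · show (u + u * (y - 1)⁻¹) * (u * (y - 1)⁻¹)⁻¹ = y
        field_simp
        ring
  have hinjW : Set.InjOn (fun b => (u + b) * b⁻¹) W := by
    rintro a ⟨ha0, _⟩ b ⟨hb0, _⟩ h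
    simp only at h
    field_simp at h
    have : u * a = u * b := by linear_combination -h
    exact mul_left_cancel₀ hu this
  have hmix : A1.ncard + A2.ncard = t := by
    rw [← Set.ncard_union_eq hdisj12 (Set.toFinite _) (Set.toFinite _), ← hWsplit,
      ← Set.ncard_image_of_injOn hinjW, himgW, hC1card]
  -- decompositions of the three counts
  set E1 : Set F := {b : F | b ∈ C0 ∧ u + b = 0} with hE1
  set E2 : Set F := {b : F | b = 0 ∧ u ∈ C1} with hE2
  set E3 : Set F := {b : F | b = 0 ∧ u ∈ C0} with hE3
  have hd1 : cnt ({0} ∪ C1) C0 = E1.ncard + A1.ncard := by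
    rw [hcnt']
    have hset : {b : F | b ∈ C0 ∧ u + b ∈ {0} ∪ C1} = E1 ∪ A1 := by
      ext b
      simp only [Set.mem_setOf_eq, Set.mem_union, Set.mem_singleton_iff, hE1, hA1]
      tauto
    rw [hset, Set.ncard_union_eq ?_ (Set.toFinite _) (Set.toFinite _)]
    rw [Set.disjoint_left]
    rintro b hb hb'
    rw [hE1, Set.mem_setOf_eq] at hb
    rw [hA1, Set.mem_setOf_eq, hC1] at hb'
    exact hb'.2.1 hb.2
  have hd2 : cnt C1 ({0} ∪ C0) = E2.ncard + A1.ncard := by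
    rw [hcnt']
    have hset : {b : F | b ∈ {0} ∪ C0 ∧ u + b ∈ C1} = E2 ∪ A1 := by
      ext b
      simp only [Set.mem_setOf_eq, Set.mem_union, Set.mem_singleton_iff, hE2, hA1]
      constructor
      · rintro ⟨h0 | hb, hub⟩
        · subst h0; left; exact ⟨rfl, by simpa using hub⟩
        · right; exact ⟨hb, hub⟩
      · rintro (⟨h0, hU⟩ | ⟨hb, hub⟩)
        · subst h0; exact ⟨Or.inl rfl, by simpa using hU⟩
        · exact ⟨Or.inr hb, hub⟩
    rw [hset, Set.ncard_union_eq ?_ (Set.toFinite _) (Set.toFinite _)]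
    rw [Set.disjoint_left]
    rintro b hb hb'
    rw [hE2, Set.mem_setOf_eq] at hb
    rw [hA1, Set.mem_setOf_eq, hC0] at hb'
    exact hb'.1.1 hb.1
  have hd3 : cnt C0 ({0} ∪ C1) = E3.ncard + A2.ncard := by
    rw [hcnt']
    have hset : {b : F | b ∈ {0} ∪ C1 ∧ u + b ∈ C0} = E3 ∪ A2 := by
      ext b
      simp only [Set.mem_setOf_eq, Set.mem_union, Set.mem_singleton_iff, hE3, hA2]
      constructor
      · rintro ⟨h0 | hb, hub⟩
        · subst h0; left; exact ⟨rfl, by simpa using hub⟩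
        · right; exact ⟨hb, hub⟩
      · rintro (⟨h0, hU⟩ | ⟨hb, hub⟩)
        · subst h0; exact ⟨Or.inl rfl, by simpa using hU⟩
        · exact ⟨Or.inr hb, hub⟩
    rw [hset, Set.ncard_union_eq ?_ (Set.toFinite _) (Set.toFinite _)]
    rw [Set.disjoint_left]
    rintro b hb hb'
    rw [hE3, Set.mem_setOf_eq] at hb
    rw [hA2, Set.mem_setOf_eq, hC1] at hb'
    exact hb'.1.1 hb.1
  -- even t iff -1 is a square
  have hEvenIff : Even t ↔ IsSquare (-1 : F) := by
    rw [FiniteField.isSquare_neg_one_iff, hs, Nat.even_iff, ht]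
    omega
  constructor
  · -- t even
    intro hev
    have hneg : IsSquare (-1 : F) := hEvenIff.mp hev
    have hnegiff : ∀ x : F, IsSquare (-x) ↔ IsSquare x := by
      intro x
      obtain ⟨c, hc⟩ := hneg
      have hc0 : c ≠ 0 := by
        intro h; rw [h, mul_zero] at hc
        exact one_ne_zero (neg_eq_zero.mp hc)
      have : -x = x * c ^ 2 := by rw [sq, ← hc]; ring
      rw [this, aux_sq_mul hc0]
    -- A1 and A2 have equal cardinality
    have himgA : (fun b => -(u + b)) '' A1 = A2 := by
      ext y
      simp only [Set.mem_image, hA1, hA2, Set.mem_setOf_eq, hC0, hC1]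
      constructor
      · rintro ⟨b, ⟨⟨hb0, hbs⟩, hub0, hubns⟩, rfl⟩
        refine ⟨⟨neg_ne_zero.mpr hub0, fun h => hubns ((hnegiff _).mp h)⟩, ?_, ?_⟩
        · rw [show u + -(u + b) = -b by ring]; exact neg_ne_zero.mpr hb0
        · rw [show u + -(u + b) = -b by ring, hnegiff]; exact hbs
      · rintro ⟨⟨hy0, hyns⟩, huy0, huys⟩
        refine ⟨-(u + y), ⟨⟨?_, ?_⟩, ?_, ?_⟩, by ring⟩
        · exact neg_ne_zero.mpr huy0
        · rw [hnegiff]; exact huys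
        · rw [show u + -(u + y) = -y by ring]; exact neg_ne_zero.mpr hy0
        · rw [show u + -(u + y) = -y by ring]
          exact fun h => hyns ((hnegiff _).mp h)
    have hA12 : A1.ncard = A2.ncard := by
      rw [← himgA, Set.ncard_image_of_injective]
      intro a b h
      simpa using h
    -- indicator sets
    have hind : E1.ncard + E2.ncard = 1 := by
      by_cases hsu : IsSquare u
      · have h1 : E1 = {-u} := by
          ext b
          simp only [hE1, Set.mem_setOf_eq, Set.mem_singleton_iff, hC0]
          constructor
          · rintro ⟨_, h⟩; linear_combination h
          · rintro rfl
            exact ⟨⟨neg_ne_zero.mpr hu, (hnegiff u).mpr hsu⟩, by ring⟩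
        have h2 : E2 = ∅ := by
          ext b
          simp only [hE2, Set.mem_setOf_eq, Set.mem_empty_iff_false, iff_false, hC1]
          rintro ⟨_, _, h⟩
          exact h hsu
        rw [h1, h2, Set.ncard_singleton, Set.ncard_empty]
      · have h1 : E1 = ∅ := by
          ext b
          simp only [hE1, Set.mem_setOf_eq, Set.mem_empty_iff_false, iff_false, hC0]
          rintro ⟨⟨hb0, hbs⟩, h⟩
          have : b = -u := by linear_combination h
          subst this
          exact hsu ((hnegiff u).mp hbs)
        have h2 : E2 = {0} := by
          ext b
          simp only [hE2, Set.mem_setOf_eq, Set.mem_singleton_iff, hC1]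
          exact ⟨fun h => h.1, fun h => ⟨h, hu, hsu⟩⟩
        rw [h1, h2, Set.ncard_singleton, Set.ncard_empty]
    rw [hd1, hd2]
    omega
  · -- t odd
    intro hev
    have hneg : ¬ IsSquare (-1 : F) := fun h => hev (hEvenIff.mpr h)
    have hnegiff : ∀ x : F, x ≠ 0 → (IsSquare (-x) ↔ ¬ IsSquare x) := by
      intro x hx
      have h := aux_mul_nonsq (a := (-1 : F)) (b := x) (neg_ne_zero.mpr one_ne_zero) hx
      rw [show (-1 : F) * x = -x by ring] at h
      tauto
    have hind : E1.ncard + E3.ncard = 1 := by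
      by_cases hsu : IsSquare u
      · have h1 : E1 = ∅ := by
          ext b
          simp only [hE1, Set.mem_setOf_eq, Set.mem_empty_iff_false, iff_false, hC0]
          rintro ⟨⟨hb0, hbs⟩, h⟩
          have hbe : b = -u := by linear_combination h
          subst hbe
          exact (hnegiff u hu).mp hbs hsu
        have h3 : E3 = {0} := by
          ext b
          simp only [hE3, Set.mem_setOf_eq, Set.mem_singleton_iff, hC0]
          exact ⟨fun h => h.1, fun h => ⟨h, hu, hsu⟩⟩
        rw [h1, h3, Set.ncard_singleton, Set.ncard_empty]
      · have h1 : E1 = {-u} := by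
          ext b
          simp only [hE1, Set.mem_setOf_eq, Set.mem_singleton_iff, hC0]
          constructor
          · rintro ⟨_, h⟩; linear_combination h
          · rintro rfl
            exact ⟨⟨neg_ne_zero.mpr hu, (hnegiff u hu).mpr hsu⟩, by ring⟩
        have h3 : E3 = ∅ := by
          ext b
          simp only [hE3, Set.mem_setOf_eq, Set.mem_empty_iff_false, iff_false, hC0]
          rintro ⟨_, _, h⟩
          exact hsu h
        rw [h1, h3, Set.ncard_singleton, Set.ncard_empty]
    rw [hd1, hd3]
    omega
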